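/- arXiv:1802.05447 — 2 statements merged into one kernel-verified Lean document; each statement's English description precedes it below -/
import Mathlib

section
/- Let $n_0$ and $n$ be positive integers, let $a$ be a real number with $2a > 1$, and define $\hat{\eta}_t = \frac{1}{n_0 + t}$. Then $\sum_{i = 1}^{n} \hat{\eta}_i^2 \exp\left(-2a \sum_{j = i+1}^{n} \hat{\eta}_j\right) \leq \left(\frac{n_0 + 2}{n_0 + 1}\right)^{2a} \cdot \left(\frac{1}{n + n_0 + 1}\right)^{2a} \cdot \sum_{i = 1}^{n} (i + n_0)^{2a - 2}$, where the empty sum $\sum_{j=n+1}^{n} \hat{\eta}_j$ is $0$. -/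
theorem tail_sum_ge (n0 i : ℕ) : ∀ n, i ≤ n →
    Real.log ((n0:ℝ) + n + 1) - Real.log ((n0:ℝ) + i + 1)
      ≤ ∑ j ∈ Finset.Icc (i + 1) n, 1 / ((n0:ℝ) + j) := by
  intro n
  induction n with
  | zero => intro hi; interval_cases i; simp
  | succ n ih =>
    intro hi
    rcases eq_or_lt_of_le hi with h | h
    · subst h; simp
    · have hi' : i ≤ n := Nat.lt_succ_iff.mp h
      rw [Finset.sum_Icc_succ_top (by omega : i + 1 ≤ n + 1)]
      have hp : (0:ℝ) < (n0:ℝ) + n + 1 := by positivity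
      have h1 : Real.log ((n0:ℝ) + (n+1:ℕ) + 1) - Real.log ((n0:ℝ) + n + 1)
          ≤ 1 / ((n0:ℝ) + (n+1:ℕ)) := by
        push_cast
        have h2 := Real.log_le_sub_one_of_pos
          (show (0:ℝ) < ((n0:ℝ)+n+1+1)/((n0:ℝ)+n+1) by positivity)
        rw [Real.log_div (by positivity) (by positivity)] at h2
        have h3 : ((n0:ℝ)+n+1+1)/((n0:ℝ)+n+1) - 1 = 1/((n0:ℝ)+n+1) := by
          field_simp
          ring
        rw [h3] at h2
        convert h2 using 2 <;> ring
      have h4 := ih hi'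
      linarith


/-- with `η̂_t = 1/(n₀ + t)` and `2a > 1`,
`∑_{i=1}^n η̂_i² exp(-2a ∑_{j=i+1}^n η̂_j)
  ≤ ((n₀+2)/(n₀+1))^{2a} · (1/(n+n₀+1))^{2a} · ∑_{i=1}^n (i+n₀)^{2a-2}`
(the empty tail sum for `i = n` being `0`). -/
theorem stmt_9 (n0 n : ℕ) (hn0 : 0 < n0) (hn : 0 < n) (a : ℝ) (ha : 1 < 2 * a) :
    ∑ i ∈ Finset.Icc 1 n,
        (1 / ((n0 : ℝ) + i)) ^ 2 *
          Real.exp (-(2 * a) * ∑ j ∈ Finset.Icc (i + 1) n, 1 / ((n0 : ℝ) + j)) ≤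
      (((n0 : ℝ) + 2) / ((n0 : ℝ) + 1)) ^ (2 * a) *
        (1 / ((n : ℝ) + n0 + 1)) ^ (2 * a) *
          ∑ i ∈ Finset.Icc 1 n, ((i : ℝ) + n0) ^ (2 * a - 2) := by
  have h2a : (0:ℝ) < 2 * a := by linarith
  set A : ℝ := (n:ℝ) + n0 + 1 with hA
  set C : ℝ := ((n0:ℝ) + 2) / ((n0:ℝ) + 1) with hC
  have hApos : (0:ℝ) < A := by positivity
  have hCpos : (0:ℝ) < C := by positivity
  rw [Finset.mul_sum]
  apply Finset.sum_le_sum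
  intro i hi
  obtain ⟨hi1, hin⟩ := Finset.mem_Icc.mp hi
  have hx : (0:ℝ) < (n0:ℝ) + i := by positivity
  have hB : (0:ℝ) < (n0:ℝ) + i + 1 := by positivity
  set x : ℝ := (n0:ℝ) + i with hxdef
  set B : ℝ := (n0:ℝ) + i + 1 with hBdef
  have hS := tail_sum_ge n0 i n hin
  have hAeq : (n0:ℝ) + n + 1 = A := by rw [hA]; ring
  rw [hAeq] at hS
  have hexp : Real.exp (-(2*a) * ∑ j ∈ Finset.Icc (i+1) n, 1/((n0:ℝ)+j))
      ≤ (B/A) ^ (2*a) := by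
    rw [Real.rpow_def_of_pos (by positivity), Real.log_div (by positivity) (by positivity)]
    apply Real.exp_le_exp.mpr
    nlinarith [mul_le_mul_of_nonneg_left hS h2a.le]
  have hixn : (i:ℝ) + n0 = x := by rw [hxdef]; ring
  rw [hixn]
  have step1 : (1/x)^2 * Real.exp (-(2*a) * ∑ j ∈ Finset.Icc (i+1) n, 1/((n0:ℝ)+j))
      ≤ (1/x)^2 * (B/A)^(2*a) := by
    apply mul_le_mul_of_nonneg_left hexp (by positivity)
  refine le_trans step1 ?_
  have hBC : B ≤ C * x := by
    rw [hC, div_mul_eq_mul_div, le_div_iff₀ (by positivity : (0:ℝ) < (n0:ℝ)+1)]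
    have hi1' : (1:ℝ) ≤ (i:ℝ) := by exact_mod_cast hi1
    rw [hBdef, hxdef]
    nlinarith
  have key : B^(2*a) ≤ C^(2*a) * x^(2*a) := by
    rw [← Real.mul_rpow hCpos.le hx.le]
    exact Real.rpow_le_rpow hB.le hBC h2a.le
  have hsplit : (B/A)^(2*a) = B^(2*a) * (1/A)^(2*a) := by
    rw [← Real.mul_rpow hB.le (by positivity)]
    ring_nf
  have hxsplit : x^(2*a-2) = x^(2*a) * (1/x)^2 := by
    rw [Real.rpow_sub hx, Real.rpow_two]
    field_simp
  rw [hsplit, hxsplit]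
  have hmul := mul_le_mul_of_nonneg_right key
    (by positivity : (0:ℝ) ≤ (1/x)^2 * (1/A)^(2*a))
  nlinarith [hmul]
end

section
/- Let $n_0$ and $n$ be positive integers, let $a$ be a real number with $2a > 1$, and define $\hat{\eta}_t = \frac{1}{n_0 + t}$. Then $\sum_{i = 1}^{n} \hat{\eta}_i^2 \exp\left(-2a \sum_{j = i+1}^{n} \hat{\eta}_j\right) \leq \left(\frac{n_0 + 2}{n_0 + 1}\right)^{2a} \cdot \frac{1}{2a - 1} \cdot \frac{1}{n + n_0}$, where the empty sum $\sum_{j=n+1}^{n} \hat{\eta}_j$ is $0$. -/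
lemma tele (g : ℕ → ℝ) {m n : ℕ} (h : m ≤ n + 1) :
    ∑ j ∈ Finset.Icc m n, (g (j+1) - g j) = g (n+1) - g m := by
  rw [← Finset.Ico_add_one_right_eq_Icc, Finset.sum_Ico_eq_sub _ h, Finset.sum_range_sub, Finset.sum_range_sub]
  ring

lemma step_ge (b x : ℝ) (hb : 1 ≤ b) (hx : 1 ≤ x) :
    b * x ^ (b - 1) ≤ (x + 1) ^ b - x ^ b := by
  have hx0 : (0:ℝ) < x := by linarith
  have h1 : 1 + b * (1/x) ≤ (1 + 1/x) ^ b :=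
    one_add_mul_self_le_rpow_one_add (by nlinarith [one_div_pos.mpr hx0]) hb
  have h2 : (1 + 1/x) ^ b * x ^ b = (x+1) ^ b := by
    rw [← Real.mul_rpow (by positivity) hx0.le]
    congr 1
    field_simp
  have h4 : (1/x) * x ^ b = x ^ (b-1) := by
    rw [Real.rpow_sub hx0, Real.rpow_one]; ring
  have h5 := mul_le_mul_of_nonneg_right h1 (Real.rpow_nonneg hx0.le b)
  nlinarith [h5, h4]

lemma step_le (b x : ℝ) (hb0 : 0 ≤ b) (hb : b ≤ 1) (hx : 1 ≤ x) :
    b * x ^ (b - 1) ≤ x ^ b - (x - 1) ^ b := by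
  have hx0 : (0:ℝ) < x := by linarith
  have hd1 : 1/x ≤ 1 := by
    rw [div_le_one hx0]; exact hx
  have h1 : (1 + (-(1/x))) ^ b ≤ 1 + b * (-(1/x)) :=
    rpow_one_add_le_one_add_mul_self (by linarith) hb0 hb
  have h2 : (1 + (-(1/x))) ^ b * x ^ b = (x-1) ^ b := by
    rw [← Real.mul_rpow (by linarith) hx0.le]
    congr 1
    field_simp
    ring
  have h4 : (1/x) * x ^ b = x ^ (b-1) := by
    rw [Real.rpow_sub hx0, Real.rpow_one]; ring
  have h5 := mul_le_mul_of_nonneg_right h1 (Real.rpow_nonneg hx0.le b)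
  nlinarith [h5, h4]

lemma sum_pow_le (b : ℝ) (hb : 0 < b) (n0 n : ℕ) (hn0 : 0 < n0) :
    ∑ i ∈ Finset.Icc 1 n, ((n0:ℝ) + i) ^ (b - 1) ≤ ((n0:ℝ) + n + 1) ^ b / b := by
  have hN : (0:ℝ) ≤ (n0:ℝ) + n + 1 := by positivity
  have hone : (1:ℝ) ≤ (n0:ℝ) := by exact_mod_cast hn0
  rcases le_total 1 b with h1 | h1
  · have key : ∀ i ∈ Finset.Icc 1 n, ((n0:ℝ) + i) ^ (b-1) ≤
        ((fun j : ℕ => ((n0:ℝ) + j) ^ b) (i+1) - (fun j : ℕ => ((n0:ℝ) + j) ^ b) i) / b := by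
      intro i hi
      have hx : (1:ℝ) ≤ (n0:ℝ) + i := by
        have : (0:ℝ) ≤ (i:ℝ) := by positivity
        linarith
      have h := step_ge b ((n0:ℝ) + i) h1 hx
      rw [le_div_iff₀ hb]
      push_cast
      have e : ((n0:ℝ) + ((i:ℝ) + 1)) = (n0:ℝ) + i + 1 := by ring
      rw [e]
      nlinarith
    calc ∑ i ∈ Finset.Icc 1 n, ((n0:ℝ) + i) ^ (b-1)
        ≤ ∑ i ∈ Finset.Icc 1 n,
            ((fun j : ℕ => ((n0:ℝ) + j) ^ b) (i+1) - (fun j : ℕ => ((n0:ℝ) + j) ^ b) i) / b :=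
          Finset.sum_le_sum key
      _ = ((fun j : ℕ => ((n0:ℝ) + j) ^ b) (n+1) - (fun j : ℕ => ((n0:ℝ) + j) ^ b) 1) / b := by
          rw [← Finset.sum_div]
          exact congrArg (fun z => z / b) (tele (fun j : ℕ => ((n0:ℝ) + j) ^ b) (by omega))
      _ ≤ ((n0:ℝ) + n + 1) ^ b / b := by
          gcongr
          have e : ((n0:ℝ) + ((n:ℕ)+1:ℕ)) = (n0:ℝ) + n + 1 := by push_cast; ring
          simp only [e]
          have := Real.rpow_nonneg (x := (n0:ℝ)+(1:ℕ)) (by positivity) b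
          linarith
  · have key : ∀ i ∈ Finset.Icc 1 n, ((n0:ℝ) + i) ^ (b-1) ≤
        ((fun j : ℕ => ((n0:ℝ) + j - 1) ^ b) (i+1) - (fun j : ℕ => ((n0:ℝ) + j - 1) ^ b) i) / b := by
      intro i hi
      have hx : (1:ℝ) ≤ (n0:ℝ) + i := by
        have : (0:ℝ) ≤ (i:ℝ) := by positivity
        linarith
      have h := step_le b ((n0:ℝ) + i) hb.le h1 hx
      rw [le_div_iff₀ hb]
      push_cast
      have e : ((n0:ℝ) + ((i:ℝ) + 1) - 1) = (n0:ℝ) + i := by ring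
      rw [e]
      nlinarith
    calc ∑ i ∈ Finset.Icc 1 n, ((n0:ℝ) + i) ^ (b-1)
        ≤ ∑ i ∈ Finset.Icc 1 n,
            ((fun j : ℕ => ((n0:ℝ) + j - 1) ^ b) (i+1) - (fun j : ℕ => ((n0:ℝ) + j - 1) ^ b) i) / b :=
          Finset.sum_le_sum key
      _ = ((fun j : ℕ => ((n0:ℝ) + j - 1) ^ b) (n+1) - (fun j : ℕ => ((n0:ℝ) + j - 1) ^ b) 1) / b := by
          rw [← Finset.sum_div]
          exact congrArg (fun z => z / b) (tele (fun j : ℕ => ((n0:ℝ) + j - 1) ^ b) (by omega))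
      _ ≤ ((n0:ℝ) + n + 1) ^ b / b := by
          gcongr
          have e : ((n0:ℝ) + ((n:ℕ)+1:ℕ) - 1) = (n0:ℝ) + n := by push_cast; ring
          simp only [e]
          have hmono : ((n0:ℝ) + n) ^ b ≤ ((n0:ℝ) + n + 1) ^ b :=
            Real.rpow_le_rpow (by positivity) (by linarith) hb.le
          have := Real.rpow_nonneg (x := (n0:ℝ) + (1:ℕ) - 1) (by simp) b
          linarith

/-- with `η̂_t = 1/(n₀ + t)` and `2a > 1`,
`∑_{i=1}^n η̂_i² exp(-2a ∑_{j=i+1}^n η̂_j) ≤ ((n₀+2)/(n₀+1))^{2a} · 1/(2a-1) · 1/(n+n₀)`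
(the empty tail sum for `i = n` being `0`). -/
theorem stmt_10 (n0 n : ℕ) (hn0 : 0 < n0) (hn : 0 < n) (a : ℝ) (ha : 1 < 2 * a) :
    ∑ i ∈ Finset.Icc 1 n,
        (1 / ((n0 : ℝ) + i)) ^ 2 *
          Real.exp (-(2 * a) * ∑ j ∈ Finset.Icc (i + 1) n, 1 / ((n0 : ℝ) + j)) ≤
      (((n0 : ℝ) + 2) / ((n0 : ℝ) + 1)) ^ (2 * a) * (1 / (2 * a - 1)) *
        (1 / ((n : ℝ) + n0)) := by
  have h2a : (0:ℝ) < 2*a := by linarith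
  have hb : (0:ℝ) < 2*a - 1 := by linarith
  have hone : (1:ℝ) ≤ (n0:ℝ) := by exact_mod_cast hn0
  have hNpos : (0:ℝ) < (n0:ℝ) + n + 1 := by positivity
  set C : ℝ := (((n0:ℝ)+2)/((n0:ℝ)+1)) ^ (2*a) with hC
  have hCpos : 0 < C := Real.rpow_pos_of_pos (by positivity) _
  set N : ℝ := ((n0:ℝ) + n + 1) ^ (2*a) with hN
  have hNp : 0 < N := Real.rpow_pos_of_pos hNpos _
  clear_value C N
  have key : ∀ i ∈ Finset.Icc 1 n,
      (1/((n0:ℝ)+i))^2 * Real.exp (-(2*a) * ∑ j ∈ Finset.Icc (i+1) n, 1/((n0:ℝ)+j))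
        ≤ C / N * ((n0:ℝ)+i) ^ (2*a - 1 - 1) := by
    intro i hi
    obtain ⟨hi1, hin⟩ := Finset.mem_Icc.mp hi
    have hi1R : (1:ℝ) ≤ (i:ℝ) := by exact_mod_cast hi1
    have hxi0 : (0:ℝ) < (n0:ℝ) + i := by positivity
    have hxi1 : (0:ℝ) < (n0:ℝ) + i + 1 := by positivity
    -- tail log lower bound
    have ht := tele (fun j : ℕ => Real.log ((n0:ℝ) + j)) (m := i+1) (n := n) (by omega)
    beta_reduce at ht
    have hper : ∀ j ∈ Finset.Icc (i+1) n,
        Real.log ((n0:ℝ) + ((j+1 : ℕ) : ℝ)) - Real.log ((n0:ℝ) + (j : ℝ)) ≤ 1/((n0:ℝ)+j) := by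
      intro j hj
      have hj0 : (0:ℝ) < (n0:ℝ) + j := by positivity
      have h1 : Real.log (((n0:ℝ)+j+1)/((n0:ℝ)+j)) ≤ ((n0:ℝ)+j+1)/((n0:ℝ)+j) - 1 :=
        Real.log_le_sub_one_of_pos (by positivity)
      rw [Real.log_div (by positivity) (by positivity)] at h1
      have e1 : ((n0:ℝ) + ((j+1 : ℕ) : ℝ)) = (n0:ℝ) + j + 1 := by push_cast; ring
      have e2 : ((n0:ℝ)+j+1)/((n0:ℝ)+j) - 1 = 1/((n0:ℝ)+j) := by field_simp; ring
      rw [e1]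
      linarith [h1, e2.le]
    have hsum := Finset.sum_le_sum hper
    rw [ht] at hsum
    have e1 : ((n0:ℝ) + ((n+1 : ℕ) : ℝ)) = (n0:ℝ) + n + 1 := by push_cast; ring
    have e2 : ((n0:ℝ) + ((i+1 : ℕ) : ℝ)) = (n0:ℝ) + i + 1 := by push_cast; ring
    rw [e1, e2] at hsum
    -- exp bound
    have hexp : Real.exp (-(2*a) * ∑ j ∈ Finset.Icc (i+1) n, 1/((n0:ℝ)+j))
        ≤ ((n0:ℝ)+i+1) ^ (2*a) / ((n0:ℝ)+n+1) ^ (2*a) := by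
      rw [Real.rpow_def_of_pos hxi1, Real.rpow_def_of_pos hNpos, ← Real.exp_sub,
        Real.exp_le_exp]
      nlinarith [mul_le_mul_of_nonneg_left hsum h2a.le]
    -- ratio bound
    have hr : ((n0:ℝ)+i+1) ^ (2*a) ≤ C * ((n0:ℝ)+i) ^ (2*a) := by
      have e3 : (n0:ℝ)+i+1 = (((n0:ℝ)+i+1)/((n0:ℝ)+i)) * ((n0:ℝ)+i) := by field_simp
      rw [e3, Real.mul_rpow (by positivity) hxi0.le]
      have hratio : ((n0:ℝ)+i+1)/((n0:ℝ)+i) ≤ ((n0:ℝ)+2)/((n0:ℝ)+1) := by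
        rw [div_le_div_iff₀ hxi0 (by positivity)]
        nlinarith
      rw [hC]
      exact mul_le_mul_of_nonneg_right
        (Real.rpow_le_rpow (by positivity) hratio h2a.le) (Real.rpow_nonneg hxi0.le _)
    have hq : (1/((n0:ℝ)+i))^2 * ((n0:ℝ)+i) ^ (2*a) = ((n0:ℝ)+i) ^ (2*a - 1 - 1) := by
      have e4 : ((n0:ℝ)+i) ^ (2*a - 1 - 1) = ((n0:ℝ)+i) ^ (2*a) / ((n0:ℝ)+i) ^ (2:ℕ) := by
        rw [← Real.rpow_natCast ((n0:ℝ)+i) 2, ← Real.rpow_sub hxi0]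
        congr 1
        push_cast
        ring
      rw [e4, div_pow, one_pow]
      field_simp
    calc (1/((n0:ℝ)+i))^2 * Real.exp (-(2*a) * ∑ j ∈ Finset.Icc (i+1) n, 1/((n0:ℝ)+j))
        ≤ (1/((n0:ℝ)+i))^2 * (((n0:ℝ)+i+1) ^ (2*a) / ((n0:ℝ)+n+1) ^ (2*a)) := by
          apply mul_le_mul_of_nonneg_left hexp (by positivity)
      _ ≤ (1/((n0:ℝ)+i))^2 * ((C * ((n0:ℝ)+i) ^ (2*a)) / ((n0:ℝ)+n+1) ^ (2*a)) := by
          apply mul_le_mul_of_nonneg_left _ (by positivity)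
          exact div_le_div_of_nonneg_right hr (by positivity)
      _ = C / N * ((1/((n0:ℝ)+i))^2 * ((n0:ℝ)+i) ^ (2*a)) := by rw [hN]; ring
      _ = C / N * ((n0:ℝ)+i) ^ (2*a - 1 - 1) := by rw [hq]
  calc ∑ i ∈ Finset.Icc 1 n,
        (1/((n0:ℝ)+i))^2 * Real.exp (-(2*a) * ∑ j ∈ Finset.Icc (i+1) n, 1/((n0:ℝ)+j))
      ≤ ∑ i ∈ Finset.Icc 1 n, C / N * ((n0:ℝ)+i) ^ (2*a - 1 - 1) := Finset.sum_le_sum key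
    _ = C / N * ∑ i ∈ Finset.Icc 1 n, ((n0:ℝ)+i) ^ (2*a - 1 - 1) := by rw [Finset.mul_sum]
    _ ≤ C / N * (((n0:ℝ) + n + 1) ^ (2*a-1) / (2*a-1)) := by
        apply mul_le_mul_of_nonneg_left (sum_pow_le (2*a-1) hb n0 n hn0) (by positivity)
    _ = C * (1/(2*a-1)) * (1/((n0:ℝ)+n+1)) := by
        have hr2 : ((n0:ℝ)+n+1) ^ (2*a-1) = N / ((n0:ℝ)+n+1) := by
          rw [hN, eq_div_iff hNpos.ne', ← Real.rpow_add_one hNpos.ne']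
          congr 1
          ring
        rw [hr2, div_div, div_mul_div_comm, mul_comm C N, mul_div_mul_left _ _ hNp.ne', div_mul_eq_div_div]
        ring
    _ ≤ C * (1/(2*a-1)) * (1/((n:ℝ)+n0)) := by
        apply mul_le_mul_of_nonneg_left _ (by positivity)
        apply one_div_le_one_div_of_le (by positivity)
        linarith
end
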